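/- Let d be a |V|×|V| matrix of positive integers (delays) and p a matrix of nonnegative integers (plant delays), and define the constraint space S of block transfer matrices whose (i,j) block has delay at least d_{ij} (i.e., coefficients of z^{-k} vanish for k < d_{ij}), and let G₂₂ have (i,j) block with delay at least p_{ij}. If d_{ki} + p_{ij} + d_{jl} ≥ d_{kl} for all i,j,k,l, then S is quadratically invariant with respect to G₂₂: for all K ∈ S, K G₂₂ K ∈ S. -/

import Mathlib

open Matrix

/-- A block transfer matrix (blocks are n×n matrices of formal power series in z⁻¹)
`M` "has delay ≥ d" in a block when all coefficients of order `< d` of that block vanish. -/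
def blockHasDelay {n : ℕ} (M : Matrix (Fin n) (Fin n) (PowerSeries ℝ)) (d : ℕ) : Prop :=
  ∀ k < d, ∀ a b, PowerSeries.coeff (R := ℝ) k (M a b) = 0

lemma blockHasDelay_mul {n : ℕ} {A B : Matrix (Fin n) (Fin n) (PowerSeries ℝ)} {d₁ d₂ : ℕ}
    (hA : blockHasDelay A d₁) (hB : blockHasDelay B d₂) :
    blockHasDelay (A * B) (d₁ + d₂) := by
  intro k hk a b
  rw [Matrix.mul_apply]
  rw [map_sum]
  refine Finset.sum_eq_zero fun c _ => ?_
  rw [PowerSeries.coeff_mul]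
  refine Finset.sum_eq_zero fun q hq => ?_
  rw [Finset.HasAntidiagonal.mem_antidiagonal] at hq
  by_cases h1 : q.1 < d₁
  · rw [hA q.1 h1 a c, zero_mul]
  · have : q.2 < d₂ := by omega
    rw [hB q.2 this c b, mul_zero]

lemma blockHasDelay_mono {n : ℕ} {A : Matrix (Fin n) (Fin n) (PowerSeries ℝ)} {d₁ d₂ : ℕ}
    (h : d₂ ≤ d₁) (hA : blockHasDelay A d₁) : blockHasDelay A d₂ :=
  fun k hk => hA k (lt_of_lt_of_le hk h)

/-- Quadratic invariance of delay constraint spaces: if `d_{ki} + p_{ij} + d_{jl} ≥ d_{kl}`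
for all `i,j,k,l`, then for every `K` whose `(k,i)` block has delay ≥ `d_{ki}`, and plant
`G₂₂` whose `(i,j)` block has delay ≥ `p_{ij}`, every `(k,l)` block of `K G₂₂ K` has
delay ≥ `d_{kl}`. -/
theorem stmt_10 (V n : ℕ) (d : Fin V → Fin V → ℕ) (pd : Fin V → Fin V → ℕ)
    (hdpos : ∀ i j, 0 < d i j)
    (hineq : ∀ i j k l, d k l ≤ d k i + pd i j + d j l)
    (K G₂₂ : Matrix (Fin V) (Fin V) (Matrix (Fin n) (Fin n) (PowerSeries ℝ)))
    (hK : ∀ k i, blockHasDelay (K k i) (d k i))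
    (hG : ∀ i j, blockHasDelay (G₂₂ i j) (pd i j)) :
    ∀ k l, blockHasDelay ((K * G₂₂ * K) k l) (d k l) := by
  intro k l m hm a b
  rw [Matrix.mul_apply]
  rw [Matrix.sum_apply]
  rw [map_sum]
  refine Finset.sum_eq_zero fun j _ => ?_
  have hKG : ∀ i, blockHasDelay ((K k i * G₂₂ i j) * K j l) (d k l) := fun i =>
    blockHasDelay_mono (hineq i j k l)
      (blockHasDelay_mul (blockHasDelay_mul (hK k i) (hG i j)) (hK j l))
  have : (K * G₂₂) k j * K j l = ∑ i, (K k i * G₂₂ i j) * K j l := by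
    rw [Matrix.mul_apply, Finset.sum_mul]
  rw [this, Matrix.sum_apply, map_sum]
  exact Finset.sum_eq_zero fun i _ => hKG i m hm a b
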